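/- arXiv:2508.07188 — 2 statements merged into one kernel-verified Lean document; each statement's English description precedes it below -/
import Mathlib

section
/- Let σ be a positive semidefinite d×d complex matrix and let U, V be d×d unitary matrices. Then Re Tr[(U σ Uᴴ)(V σ Vᴴ)] ≤ Re Tr(σ²). (Supporting lemma: the cross terms appearing in the purity computation of Theorem 1's proof are each bounded by the purity of σ.) -/
open Matrix Kronecker ComplexOrder BigOperators

lemma trace_conjT_mul_self_re_nonneg {d : ℕ} (M : Matrix (Fin d) (Fin d) ℂ) :
    0 ≤ ((Mᴴ * M).trace).re := by
  rw [Matrix.trace]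
  simp only [Matrix.diag, Matrix.mul_apply, Matrix.conjTranspose_apply]
  rw [Complex.re_sum]
  apply Finset.sum_nonneg
  intro i _
  rw [Complex.re_sum]
  apply Finset.sum_nonneg
  intro j _
  simpa [Complex.normSq_apply] using Complex.normSq_nonneg (M j i)

/-- Cross-term bound: for a positive semidefinite matrix `σ` and unitaries
`U, V`, we have `Re Tr[(U σ Uᴴ)(V σ Vᴴ)] ≤ Re Tr(σ²)`. -/
theorem crossTerm_le_purity
    {d : ℕ} (σ : Matrix (Fin d) (Fin d) ℂ) (hσ : σ.PosSemidef)
    (U V : Matrix (Fin d) (Fin d) ℂ)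
    (hU : U ∈ Matrix.unitaryGroup (Fin d) ℂ)
    (hV : V ∈ Matrix.unitaryGroup (Fin d) ℂ) :
    (((U * σ * Uᴴ) * (V * σ * Vᴴ)).trace).re ≤ ((σ * σ).trace).re := by
  have hU1 : Uᴴ * U = 1 := hU.1
  have hV1 : Vᴴ * V = 1 := hV.1
  set A := U * σ * Uᴴ with hA
  set B := V * σ * Vᴴ with hB
  have hAh : Aᴴ = A := by
    simp [hA, Matrix.conjTranspose_mul, hσ.1.eq, Matrix.mul_assoc]
  have hBh : Bᴴ = B := by
    simp [hB, Matrix.conjTranspose_mul, hσ.1.eq, Matrix.mul_assoc]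
  have hAA : (A * A).trace = (σ * σ).trace := by
    rw [hA]
    rw [show U * σ * Uᴴ * (U * σ * Uᴴ) = U * (σ * (Uᴴ * U) * σ) * Uᴴ by
      simp [Matrix.mul_assoc]]
    rw [hU1, Matrix.mul_one, Matrix.trace_mul_cycle, ← Matrix.mul_assoc, hU1, Matrix.one_mul]
  have hBB : (B * B).trace = (σ * σ).trace := by
    rw [hB]
    rw [show V * σ * Vᴴ * (V * σ * Vᴴ) = V * (σ * (Vᴴ * V) * σ) * Vᴴ by
      simp [Matrix.mul_assoc]]
    rw [hV1, Matrix.mul_one, Matrix.trace_mul_cycle, ← Matrix.mul_assoc, hV1, Matrix.one_mul]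
  have key := trace_conjT_mul_self_re_nonneg (A - B)
  have hsub : ((A - B)ᴴ * (A - B)) = A * A - A * B - B * A + B * B := by
    rw [Matrix.conjTranspose_sub, hAh, hBh]
    noncomm_ring
  rw [hsub] at key
  have hcomm : (B * A).trace = (A * B).trace := Matrix.trace_mul_comm B A
  simp only [Matrix.trace_add, Matrix.trace_sub, hcomm, hAA, hBB, Complex.add_re,
    Complex.sub_re] at key
  linarith
end

section
/- Let U be the 8×8 matrix on three qubits given by U = |000⟩⟨000| + (1/√3)|000⟩⟨100| − (1/√3)|001⟩⟨010| + (1/√3)|001⟩⟨100| − (1/√3)|010⟩⟨001| + (1/√3)|010⟩⟨011| + (1/√3)|010⟩⟨100| + |011⟩⟨101| + (1/√3)|100⟩⟨010| − (1/√3)|100⟩⟨011| + (1/√3)|100⟩⟨100| + |101⟩⟨110| + (1/√6)|110⟩⟨001| + (1/√6)|110⟩⟨010| + (1/√6)|110⟩⟨011| + (1/√2)|110⟩⟨111| + (1/√6)|111⟩⟨001| + (1/√6)|111⟩⟨010| + (1/√6)|111⟩⟨011| − (1/√2)|111⟩⟨111| (the unitary creating the W state (|001⟩+|010⟩+|100⟩)/√3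 from |100⟩), regard qubits 1 and 2 as the system S and qubit 3 as the environment E, and let σ₁ = |100⟩⟨100| and σ₂ = |ψ⟩⟨ψ| with |ψ⟩ = (|100⟩ + |011⟩)/√2. Set ρ₁ = U σ₁ Uᴴ and ρ₂ = U σ₂ Uᴴ. Then the system trace distance strictly increases while the environment trace distance strictly decreases: (1/2)‖Tr_E ρ₁ − Tr_E ρ₂‖₁ > (1/2)‖Tr_E σ₁ − Tr_E σ₂‖₁ = 1/2, and (1/2)‖Tr_S ρ₁ − Tr_S ρ₂‖₁ < (1/2)‖Tr_S σ₁ − Tr_S σ₂‖₁ = 1/2. (Numerical example 3: for the W-state-creating unitary, the system channel is P-indivisible while the environment channel is P-divisible, even though the joint evolution is unitary.) -/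
open Matrix ComplexOrder BigOperators

/-- The trace norm of a complex square matrix. -/
noncomputable def traceNorm {n : Type*} [Fintype n] [DecidableEq n]
    (A : Matrix n n ℂ) : ℝ :=
  (((Matrix.posSemidef_conjTranspose_mul_self A).1.eigenvectorUnitary.1 *
      diagonal (((↑) : ℝ → ℂ) ∘ (√·) ∘ (Matrix.posSemidef_conjTranspose_mul_self A).1.eigenvalues) *
      (star (Matrix.posSemidef_conjTranspose_mul_self A).1.eigenvectorUnitary : Matrix n n ℂ)).trace).re

/-- Partial trace over the second (environment) factor. -/
noncomputable def trE {dS dE : Type*} [Fintype dE]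
    (M : Matrix (dS × dE) (dS × dE) ℂ) : Matrix dS dS ℂ :=
  fun s s' => ∑ e, M (s, e) (s', e)

/-- Partial trace over the first (system) factor. -/
noncomputable def trS {dS dE : Type*} [Fintype dS]
    (M : Matrix (dS × dE) (dS × dE) ℂ) : Matrix dE dE ℂ :=
  fun e e' => ∑ s, M (s, e) (s, e')

/-- The matrix unit `|abc⟩⟨a'b'c'|` on three qubits grouped as `(q₁ × q₂) × q₃`. -/
def E (x y : (Fin 2 × Fin 2) × Fin 2) :
    Matrix ((Fin 2 × Fin 2) × Fin 2) ((Fin 2 × Fin 2) × Fin 2) ℂ :=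
  Matrix.single x y 1

noncomputable def c3 : ℂ := ((1 / Real.sqrt 3 : ℝ) : ℂ)
noncomputable def c6 : ℂ := ((1 / Real.sqrt 6 : ℝ) : ℂ)
noncomputable def c2 : ℂ := ((1 / Real.sqrt 2 : ℝ) : ℂ)

/-- The unitary creating the W state `(|001⟩+|010⟩+|100⟩)/√3` from `|100⟩`. -/
noncomputable def Wunitary :
    Matrix ((Fin 2 × Fin 2) × Fin 2) ((Fin 2 × Fin 2) × Fin 2) ℂ :=
  E ((0, 0), 0) ((0, 0), 0) + c3 • E ((0, 0), 0) ((1, 0), 0)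
    - c3 • E ((0, 0), 1) ((0, 1), 0) + c3 • E ((0, 0), 1) ((1, 0), 0)
    - c3 • E ((0, 1), 0) ((0, 0), 1) + c3 • E ((0, 1), 0) ((0, 1), 1)
    + c3 • E ((0, 1), 0) ((1, 0), 0) + E ((0, 1), 1) ((1, 0), 1)
    + c3 • E ((1, 0), 0) ((0, 1), 0) - c3 • E ((1, 0), 0) ((0, 1), 1)
    + c3 • E ((1, 0), 0) ((1, 0), 0) + E ((1, 0), 1) ((1, 1), 0)
    + c6 • E ((1, 1), 0) ((0, 0), 1) + c6 • E ((1, 1), 0) ((0, 1), 0)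
    + c6 • E ((1, 1), 0) ((0, 1), 1) + c2 • E ((1, 1), 0) ((1, 1), 1)
    + c6 • E ((1, 1), 1) ((0, 0), 1) + c6 • E ((1, 1), 1) ((0, 1), 0)
    + c6 • E ((1, 1), 1) ((0, 1), 1) - c2 • E ((1, 1), 1) ((1, 1), 1)

/-- The vector `|ψ⟩ = (|100⟩ + |011⟩)/√2`. -/
noncomputable def ψvec : (Fin 2 × Fin 2) × Fin 2 → ℂ :=
  fun x => if x = ((1, 0), 0) ∨ x = ((0, 1), 1) then c2 else 0


variable {n : Type*} [Fintype n] [DecidableEq n]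

lemma dot4 (M : Matrix n n ℂ) (i j : n) (hij : i ≠ j) (a b : ℂ) :
    star (fun k => a * (if k = i then (1:ℂ) else 0) + b * (if k = j then 1 else 0)) ⬝ᵥ
      (M *ᵥ (fun k => a * (if k = i then (1:ℂ) else 0) + b * (if k = j then 1 else 0))) =
    star a * a * M i i + star a * b * M i j + star b * a * M j i
      + star b * b * M j j := by
  simp only [dotProduct, mulVec, Pi.star_apply, star_add, star_mul',
    apply_ite (star : ℂ → ℂ), star_one, star_zero, mul_ite, mul_one, mul_zero,
    Finset.mul_sum, Finset.sum_add_distrib, add_mul, mul_add,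
    Finset.sum_ite_eq', Finset.mem_univ, if_true, ite_mul, zero_mul]
  simp [hij, hij.symm]
  ring

lemma psd_diag {M : Matrix n n ℂ} (hM : M.PosSemidef) (i : n) :
    0 ≤ (M i i).re ∧ (M i i).im = 0 := by
  have h := hM.dotProduct_mulVec_nonneg (fun k => if k = i then (1:ℂ) else 0)
  simp only [dotProduct, mulVec, Pi.star_apply,
    apply_ite (star : ℂ → ℂ), star_one, star_zero, mul_ite, mul_one, mul_zero,
    ite_mul, zero_mul, one_mul, Finset.sum_ite_eq', Finset.mem_univ, if_true,
    Complex.nonneg_iff] at h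
  exact ⟨h.1, h.2.symm⟩

lemma quad_key (a b c : ℝ) (ha : 0 ≤ a) (hb : 0 ≤ b) (hc : 0 ≤ c)
    (h : ∀ t : ℝ, 0 ≤ a * t ^ 2 - 2 * c * t + c * b) : c ≤ a * b := by
  rcases eq_or_lt_of_le hc with h0 | hc0
  · nlinarith [mul_nonneg ha hb]
  rcases eq_or_lt_of_le ha with ha0 | ha0
  · nlinarith [h 1, h (b + c)]
  · have h1 := h (c / a)
    have e : a * (c / a) ^ 2 - 2 * c * (c / a) + c * b = c * b - c ^ 2 / a := by
      field_simp; ring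
    rw [e] at h1
    have h3 : c ^ 2 ≤ c * b * a := (div_le_iff₀ ha0).mp (by linarith)
    have : c * c ≤ (a * b) * c := by nlinarith
    exact le_of_mul_le_mul_right this hc0

lemma psd_entry_sq {M : Matrix n n ℂ} (hM : M.PosSemidef) (i j : n) :
    Complex.normSq (M i j) ≤ (M i i).re * (M j j).re := by
  obtain ⟨hi, hi'⟩ := psd_diag hM i
  obtain ⟨hj, hj'⟩ := psd_diag hM j
  rcases eq_or_ne i j with rfl | hij
  · rw [Complex.normSq_apply, hi']
    nlinarith
  · have hji : M j i = star (M i j) := by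
      have := hM.1
      rw [Matrix.IsHermitian] at this
      have := congrArg (fun N => N j i) this
      simpa [Matrix.conjTranspose_apply] using this.symm
    apply quad_key _ _ _ hi hj (Complex.normSq_nonneg _)
    intro t
    have h := hM.dotProduct_mulVec_nonneg (fun k => (t:ℂ) * (if k = i then (1:ℂ) else 0)
      + (-(star (M i j))) * (if k = j then 1 else 0))
    rw [dot4 M i j hij] at h
    rw [Complex.nonneg_iff] at h
    have := h.1
    simp only [hji, star_neg, star_star, Complex.star_def, Complex.conj_ofReal,
      RingHomCompTriple.comp_apply, RingHom.id_apply, Complex.conj_conj] at this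
    have e : ((t:ℂ) * (t:ℂ) * M i i + (t:ℂ) * -(starRingEnd ℂ) (M i j) * M i j
        + -(M i j) * (t:ℂ) * (starRingEnd ℂ) (M i j)
        + -(M i j) * -(starRingEnd ℂ) (M i j) * M j j).re
        = (M i i).re * t ^ 2 - 2 * Complex.normSq (M i j) * t
          + Complex.normSq (M i j) * (M j j).re := by
      simp only [Complex.add_re, Complex.mul_re, Complex.neg_re, Complex.neg_im,
        Complex.mul_im, Complex.ofReal_re, Complex.ofReal_im, Complex.conj_re,
        Complex.conj_im, Complex.normSq_apply, hi', hj']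
      ring
    rw [e] at this
    linarith [this]

lemma trace_re_nonneg {M : Matrix n n ℂ} (hM : M.PosSemidef) :
    0 ≤ (M.trace).re := by
  rw [Matrix.trace, Complex.re_sum]
  exact Finset.sum_nonneg fun i _ => (psd_diag hM i).1

lemma trace_sq_ge_trace_mul_self {M : Matrix n n ℂ} (hM : M.PosSemidef) :
    ((M * M).trace).re ≤ ((M.trace).re) ^ 2 := by
  have hherm : ∀ i j, M j i = (starRingEnd ℂ) (M i j) := by
    intro i j
    have := hM.1
    rw [Matrix.IsHermitian] at this
    have := congrArg (fun N => N j i) this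
    simpa [Matrix.conjTranspose_apply] using this.symm
  have lhs : ((M * M).trace).re = ∑ i, ∑ j, Complex.normSq (M i j) := by
    rw [Matrix.trace, Complex.re_sum]
    apply Finset.sum_congr rfl; intro i _
    rw [Matrix.diag_apply, Matrix.mul_apply, Complex.re_sum]
    apply Finset.sum_congr rfl; intro j _
    rw [hherm i j, Complex.mul_conj, Complex.ofReal_re]
  have rhs : ((M.trace).re) ^ 2 = ∑ i, ∑ j, (M i i).re * (M j j).re := by
    rw [Matrix.trace, Complex.re_sum, sq, Finset.sum_mul_sum]
    rfl
  rw [lhs, rhs]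
  apply Finset.sum_le_sum; intro i _
  apply Finset.sum_le_sum; intro j _
  exact psd_entry_sq hM i j

lemma hc2sq : c2 ^ 2 = 1 / 2 := by
  rw [c2]; norm_cast
  rw [div_pow, one_pow, Real.sq_sqrt (by norm_num)]; norm_num

lemma hc3sq : c3 ^ 2 = 1 / 3 := by
  rw [c3]; norm_cast
  rw [div_pow, one_pow, Real.sq_sqrt (by norm_num)]; norm_num

lemma hstar2 : (starRingEnd ℂ) c2 = c2 := by rw [c2, Complex.conj_ofReal]
lemma hstar3 : (starRingEnd ℂ) c3 = c3 := by rw [c3, Complex.conj_ofReal]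
lemma hstar6 : (starRingEnd ℂ) c6 = c6 := by rw [c6, Complex.conj_ofReal]

lemma hc2p3 : c2 ^ 3 = c2 / 2 := by
  rw [pow_succ, hc2sq]; ring
lemma hc3p3 : c3 ^ 3 = c3 / 3 := by
  rw [pow_succ, hc3sq]; ring
lemma hc2p4 : c2 ^ 4 = 1 / 4 := by
  rw [show (4:ℕ) = 2*2 from rfl, pow_mul, hc2sq]; norm_num
lemma hc3p4 : c3 ^ 4 = 1 / 9 := by
  rw [show (4:ℕ) = 2*2 from rfl, pow_mul, hc3sq]; norm_num

noncomputable def u1 : (Fin 2 × Fin 2) × Fin 2 → ℂ := fun x =>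
  if x = ((0,0),0) ∨ x = ((0,0),1) ∨ x = ((0,1),0) ∨ x = ((1,0),0) then c3 else 0

noncomputable def u2 : (Fin 2 × Fin 2) × Fin 2 → ℂ := fun x =>
  if x = ((0,0),0) ∨ x = ((0,0),1) then c6 else
  if x = ((0,1),0) then 2*c6 else
  if x = ((1,1),0) ∨ x = ((1,1),1) then c3/2 else 0

lemma hc6 : c6 = c2 * c3 := by
  rw [c6, c2, c3]; norm_cast
  rw [div_mul_div_comm, one_mul, ← Real.sqrt_mul (by norm_num)]
  norm_num

set_option maxHeartbeats 1000000 in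
lemma hc23 : c2 * c3 = c6 := by
  rw [c6, c2, c3]; norm_cast
  rw [div_mul_div_comm, one_mul, ← Real.sqrt_mul (by norm_num)]
  norm_num

set_option maxHeartbeats 1000000 in
lemma hWψ : (Wunitary *ᵥ ψvec) = u2 := by
  funext x
  obtain ⟨⟨a, b⟩, c⟩ := x
  fin_cases a <;> fin_cases b <;> fin_cases c <;>
    simp [Matrix.mulVec, dotProduct, Fintype.sum_prod_type, Fin.sum_univ_two,
      Wunitary, E, Matrix.single, Prod.ext_iff, u2, ψvec, hc6] <;>
    ring_nf <;> simp [hc2sq] <;> ring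

lemma stdvmv {n : Type*} [DecidableEq n] (p : n) :
    Matrix.single p p (1:ℂ) =
      Matrix.vecMulVec (fun x => if x = p then (1:ℂ) else 0)
        (star fun x => if x = p then (1:ℂ) else 0) := by
  ext x y
  simp only [Matrix.single, Matrix.of_apply, Matrix.vecMulVec_apply, Pi.star_apply,
    apply_ite (star : ℂ → ℂ), star_one, star_zero]
  split_ifs with h1 h2 h3 h2 <;> simp_all

-- the traceNorm-from-sqrt lemma
section
open scoped MatrixOrder
lemma traceNorm_eq_sqrt {n : Type*} [Fintype n] [DecidableEq n] (A : Matrix n n ℂ) :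
    traceNorm A = ((CFC.sqrt (Aᴴ * A)).trace).re := by
  have hH := Matrix.posSemidef_conjTranspose_mul_self A
  rw [CFC.sqrt_eq_real_sqrt _ hH.nonneg, cfcₙ_eq_cfc, hH.1.cfc_eq]
  rfl

lemma traceNorm_eq_of_sq {n : Type*} [Fintype n] [DecidableEq n]
    (A B : Matrix n n ℂ) (hB : B.PosSemidef) (h : B ^ 2 = Aᴴ * A) :
    traceNorm A = (B.trace).re := by
  rw [traceNorm_eq_sqrt, ← h, CFC.sqrt_sq B hB.nonneg]
end

noncomputable def dsσ : Matrix (Fin 2 × Fin 2) (Fin 2 × Fin 2) ℂ :=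
  Matrix.diagonal (fun p => if p = (0,1) then -(1/2 : ℂ) else if p = (1,0) then 1/2 else 0)

lemma σS_norm (σ₁ σ₂ : Matrix ((Fin 2 × Fin 2) × Fin 2) ((Fin 2 × Fin 2) × Fin 2) ℂ)
    (hσ₁ : σ₁ = Matrix.single ((1, 0), 0) ((1, 0), 0) 1)
    (hσ₂ : σ₂ = Matrix.vecMulVec ψvec (star ψvec)) :
    traceNorm (trE σ₁ - trE σ₂) = 1 := by
  have hD : trE σ₁ - trE σ₂ = dsσ := by
    subst hσ₁ hσ₂
    ext ⟨a, b⟩ ⟨a', b'⟩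
    fin_cases a <;> fin_cases b <;> fin_cases a' <;> fin_cases b' <;>
      simp [trE, Matrix.vecMulVec_apply, Matrix.single, ψvec, dsσ,
        Fin.sum_univ_two, Prod.ext_iff, Matrix.diagonal, hstar2, hc2sq, ← sq] <;>
      norm_num [hstar2, hc2sq, ← sq]
  rw [hD]
  rw [traceNorm_eq_of_sq _ (Matrix.diagonal (fun p => if p = (0,1) ∨ p = (1,0) then (1/2 : ℂ) else 0))]
  · simp [Matrix.trace, Matrix.diagonal, Fintype.sum_prod_type, Fin.sum_univ_two, Prod.ext_iff]
    norm_num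
  · apply Matrix.PosSemidef.diagonal
    intro p
    simp only [Pi.zero_apply]
    split_ifs <;> norm_num [Complex.le_def]
  · ext ⟨a, b⟩ ⟨a', b'⟩
    fin_cases a <;> fin_cases b <;> fin_cases a' <;> fin_cases b' <;>
      simp [dsσ, sq, Matrix.mul_apply, Matrix.diagonal, Fintype.sum_prod_type,
        Fin.sum_univ_two, Prod.ext_iff, Complex.conj_ofNat] <;> norm_num

lemma σE_norm (σ₁ σ₂ : Matrix ((Fin 2 × Fin 2) × Fin 2) ((Fin 2 × Fin 2) × Fin 2) ℂ)
    (hσ₁ : σ₁ = Matrix.single ((1, 0), 0) ((1, 0), 0) 1)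
    (hσ₂ : σ₂ = Matrix.vecMulVec ψvec (star ψvec)) :
    traceNorm (trS σ₁ - trS σ₂) = 1 := by
  have hD : trS σ₁ - trS σ₂ =
      Matrix.diagonal (fun e : Fin 2 => if e = 0 then (1/2 : ℂ) else -(1/2)) := by
    subst hσ₁ hσ₂
    ext e e'
    fin_cases e <;> fin_cases e' <;>
      simp [trS, Matrix.vecMulVec_apply, Matrix.single, ψvec,
        Fintype.sum_prod_type, Fin.sum_univ_two, Prod.ext_iff, Matrix.diagonal,
        hstar2, hc2sq, ← sq, -Finset.sum_boole] <;>
      norm_num [hstar2, hc2sq, ← sq]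
  rw [hD, traceNorm_eq_of_sq _ (Matrix.diagonal (fun _ : Fin 2 => (1/2 : ℂ)))]
  · simp [Matrix.trace, Matrix.diagonal, Fin.sum_univ_two]
    try norm_num
  · exact Matrix.PosSemidef.diagonal (fun i => by norm_num [Complex.le_def])
  · ext e e'
    fin_cases e <;> fin_cases e' <;>
      simp [sq, Matrix.mul_apply, Matrix.diagonal, Fin.sum_univ_two,
        Complex.conj_ofNat] <;> (try norm_num)

lemma conj_vecMulVec {n : Type*} [Fintype n] (M : Matrix n n ℂ) (v : n → ℂ) :
    M * Matrix.vecMulVec v (star v) * Mᴴ =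
      Matrix.vecMulVec (M *ᵥ v) (star (M *ᵥ v)) := by
  ext i j
  simp only [Matrix.mul_apply, Matrix.vecMulVec_apply, Matrix.conjTranspose_apply,
    Matrix.mulVec, dotProduct,
    Pi.star_apply, star_sum, star_mul', Finset.sum_mul, Finset.mul_sum]
  apply Finset.sum_congr rfl; intro l _
  apply Finset.sum_congr rfl; intro k _
  ring

lemma posSemidef_vecMulVec {n : Type*} [Fintype n] (v : n → ℂ) :
    (Matrix.vecMulVec v (star v)).PosSemidef := by
  refine Matrix.PosSemidef.of_dotProduct_mulVec_nonneg ?_ ?_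
  · ext i j
    simp [Matrix.vecMulVec_apply, Matrix.conjTranspose_apply, mul_comm]
  · intro x
    have e : dotProduct (star x) (Matrix.vecMulVec v (star v) *ᵥ x) =
        star (dotProduct (star v) x) * (dotProduct (star v) x) := by
      simp only [dotProduct, Matrix.mulVec, Matrix.vecMulVec_apply, Pi.star_apply,
        star_sum, star_mul', star_star, Finset.mul_sum, Finset.sum_mul]
      rw [Finset.sum_comm]
      apply Finset.sum_congr rfl; intro l _
      apply Finset.sum_congr rfl; intro k _
      ring
    rw [e]
    exact star_mul_self_nonneg _

set_option maxHeartbeats 4000000 in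
lemma ρE_norm (σ₁ σ₂ ρ₁ ρ₂ : Matrix ((Fin 2 × Fin 2) × Fin 2) ((Fin 2 × Fin 2) × Fin 2) ℂ)
    (hσ₁ : σ₁ = Matrix.single ((1, 0), 0) ((1, 0), 0) 1)
    (hσ₂ : σ₂ = Matrix.vecMulVec ψvec (star ψvec))
    (hρ₁ : ρ₁ = Wunitary * σ₁ * Wunitaryᴴ)
    (hρ₂ : ρ₂ = Wunitary * σ₂ * Wunitaryᴴ) :
    traceNorm (trS ρ₁ - trS ρ₂) = 1 / 6 := by
  have hρ₁v : ρ₁ = Matrix.vecMulVec u1 (star u1) := by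
    rw [hρ₁, hσ₁, stdvmv, conj_vecMulVec]
    have h : (Wunitary *ᵥ fun x => if x = ((1,0),0) then (1:ℂ) else 0) = u1 := by
      funext x
      obtain ⟨⟨a, b⟩, c⟩ := x
      fin_cases a <;> fin_cases b <;> fin_cases c <;>
        simp [Matrix.mulVec, dotProduct, Fintype.sum_prod_type, Fin.sum_univ_two,
          Wunitary, E, Matrix.single, Prod.ext_iff, u1]
    rw [h]
  have hρ₂v : ρ₂ = Matrix.vecMulVec u2 (star u2) := by
    rw [hρ₂, hσ₂, conj_vecMulVec, hWψ]
  have hD : trS ρ₁ - trS ρ₂ = Matrix.vecMulVec (fun _ => c2 * c6)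
      (star fun _ : Fin 2 => c2 * c6) := by
    rw [hρ₁v, hρ₂v]
    ext e e'
    fin_cases e <;> fin_cases e' <;>
      simp [trS, Matrix.vecMulVec_apply, u1, u2, Fintype.sum_prod_type,
        Fin.sum_univ_two, Prod.ext_iff, hc6, hstar2, hstar3, _root_.map_mul, map_div₀,
        Complex.conj_ofNat] <;>
      ring_nf <;> simp [hc2sq, hc3sq, hc2p3, hc3p3, hc2p4, hc3p4] <;> (try ring_nf) <;>
      (try simp [hc2sq, hc3sq, hc2p3, hc3p3, hc2p4, hc3p4]) <;> (try norm_num)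
  rw [hD, traceNorm_eq_of_sq _ (Matrix.vecMulVec (fun _ => c2 * c6)
      (star fun _ : Fin 2 => c2 * c6)) (posSemidef_vecMulVec _)]
  · have hv : (Matrix.vecMulVec (fun _ => c2 * c6)
        (star fun _ : Fin 2 => c2 * c6)).trace = (1/6 : ℂ) := by
      simp [Matrix.trace, Matrix.vecMulVec_apply, Fin.sum_univ_two, hc6,
        _root_.map_mul, hstar2, hstar3]
      ring_nf
      simp [hc2sq, hc3sq, hc2p3, hc3p3, hc2p4, hc3p4]
      try norm_num
    rw [hv]
    norm_num
  · ext e e'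
    fin_cases e <;> fin_cases e' <;>
      simp [sq, Matrix.mul_apply, Matrix.vecMulVec_apply, Matrix.conjTranspose_apply,
        Fin.sum_univ_two, hc6, hstar2, hstar3, _root_.map_mul] <;>
      ring_nf <;> simp [hc2sq, hc3sq, hc2p3, hc3p3, hc2p4, hc3p4] <;>
      (try ring_nf) <;> (try norm_num)

noncomputable def ASm : Matrix (Fin 2 × Fin 2) (Fin 2 × Fin 2) ℂ := fun p q =>
  if p = (0,0) then
    (if q = (0,0) then 1/3 else if q = (0,1) then 0 else
     if q = (1,0) then 1/3 else -(c2/3))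
  else if p = (0,1) then
    (if q = (0,0) then 0 else if q = (0,1) then -(1/3) else
     if q = (1,0) then 1/3 else -(c2/3))
  else if p = (1,0) then
    (if q = (1,1) then 0 else 1/3)
  else
    (if q = (0,0) then -(c2/3) else if q = (0,1) then -(c2/3) else
     if q = (1,0) then 0 else -(1/6))

set_option maxHeartbeats 2000000 in
lemma hPtrace : ((ASmᴴ * ASm).trace) = (37/36 : ℂ) := by
  simp only [Matrix.trace, Matrix.diag_apply, Matrix.mul_apply,
    Matrix.conjTranspose_apply, Fintype.sum_prod_type, Fin.sum_univ_two]
  simp [ASm, Prod.ext_iff, hstar2, map_neg, map_div₀, Complex.conj_ofNat, _root_.map_one]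
  ring_nf
  simp [hc2sq, hc2p3, hc2p4]
  norm_num

open scoped MatrixOrder in
set_option maxHeartbeats 4000000 in
lemma ρS_gt (σ₁ σ₂ ρ₁ ρ₂ : Matrix ((Fin 2 × Fin 2) × Fin 2) ((Fin 2 × Fin 2) × Fin 2) ℂ)
    (hσ₁ : σ₁ = Matrix.single ((1, 0), 0) ((1, 0), 0) 1)
    (hσ₂ : σ₂ = Matrix.vecMulVec ψvec (star ψvec))
    (hρ₁ : ρ₁ = Wunitary * σ₁ * Wunitaryᴴ)
    (hρ₂ : ρ₂ = Wunitary * σ₂ * Wunitaryᴴ) :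
    1 < traceNorm (trE ρ₁ - trE ρ₂) := by
  have hρ₁v : ρ₁ = Matrix.vecMulVec u1 (star u1) := by
    rw [hρ₁, hσ₁, stdvmv, conj_vecMulVec]
    have h : (Wunitary *ᵥ fun x => if x = ((1,0),0) then (1:ℂ) else 0) = u1 := by
      funext x
      obtain ⟨⟨a, b⟩, c⟩ := x
      fin_cases a <;> fin_cases b <;> fin_cases c <;>
        simp [Matrix.mulVec, dotProduct, Fintype.sum_prod_type, Fin.sum_univ_two,
          Wunitary, E, Matrix.single, Prod.ext_iff, u1]
    rw [h]
  have hρ₂v : ρ₂ = Matrix.vecMulVec u2 (star u2) := by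
    rw [hρ₂, hσ₂, conj_vecMulVec, hWψ]
  have hA : trE ρ₁ - trE ρ₂ = ASm := by
    rw [hρ₁v, hρ₂v]
    ext ⟨a, b⟩ ⟨a', b'⟩
    fin_cases a <;> fin_cases b <;> fin_cases a' <;> fin_cases b' <;>
      simp [trE, Matrix.vecMulVec_apply, u1, u2, ASm, Fin.sum_univ_two, Prod.ext_iff,
        hc6, hstar2, hstar3, _root_.map_mul, map_div₀, Complex.conj_ofNat, map_neg] <;>
      ring_nf <;> simp [hc2sq, hc3sq, hc2p3, hc3p3, hc2p4, hc3p4] <;>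
      (try ring_nf) <;> (try simp [hc2sq, hc3sq, hc2p3, hc3p3, hc2p4, hc3p4]) <;>
      (try norm_num)
  rw [hA]
  have hP := Matrix.posSemidef_conjTranspose_mul_self ASm
  have hB := (CFC.sqrt_nonneg (ASmᴴ * ASm)).posSemidef
  have hBB : CFC.sqrt (ASmᴴ * ASm) * CFC.sqrt (ASmᴴ * ASm) = ASmᴴ * ASm :=
    CFC.sqrt_mul_sqrt_self _ hP.nonneg
  have ht0 : 0 ≤ ((CFC.sqrt (ASmᴴ * ASm)).trace).re := trace_re_nonneg hB
  have h2 : ((ASmᴴ * ASm).trace).re ≤ (((CFC.sqrt (ASmᴴ * ASm)).trace).re) ^ 2 := by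
    have h3 := trace_sq_ge_trace_mul_self hB
    rwa [hBB] at h3
  rw [hPtrace] at h2
  have h37 : (37/36 : ℝ) ≤ (((CFC.sqrt (ASmᴴ * ASm)).trace).re) ^ 2 := by
    convert h2 using 2
    norm_num
  rw [traceNorm_eq_sqrt]
  nlinarith

/-- Numerical example 3 (W state): for the W-state-creating unitary with
inputs `σ₁ = |100⟩⟨100|` and `σ₂ = (|100⟩+|011⟩)(⟨100|+⟨011|)/2`, the system
trace distance strictly increases above its input value `1/2` (system channel
is P-indivisible) while the environment trace distance strictly decreases
below its input value `1/2` (environment channel is P-divisible). -/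
theorem w_example_system_P_indivisible_environment_P_divisible
    (σ₁ σ₂ ρ₁ ρ₂ : Matrix ((Fin 2 × Fin 2) × Fin 2) ((Fin 2 × Fin 2) × Fin 2) ℂ)
    (hσ₁ : σ₁ = Matrix.single ((1, 0), 0) ((1, 0), 0) 1)
    (hσ₂ : σ₂ = Matrix.vecMulVec ψvec (star ψvec))
    (hρ₁ : ρ₁ = Wunitary * σ₁ * Wunitaryᴴ)
    (hρ₂ : ρ₂ = Wunitary * σ₂ * Wunitaryᴴ) :
    ((1 / 2 : ℝ) * traceNorm (trE ρ₁ - trE ρ₂) >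
        (1 / 2 : ℝ) * traceNorm (trE σ₁ - trE σ₂) ∧
      (1 / 2 : ℝ) * traceNorm (trE σ₁ - trE σ₂) = 1 / 2) ∧
    ((1 / 2 : ℝ) * traceNorm (trS ρ₁ - trS ρ₂) <
        (1 / 2 : ℝ) * traceNorm (trS σ₁ - trS σ₂) ∧
      (1 / 2 : ℝ) * traceNorm (trS σ₁ - trS σ₂) = 1 / 2) := by
  refine ⟨⟨?_, ?_⟩, ⟨?_, ?_⟩⟩
  · rw [σS_norm σ₁ σ₂ hσ₁ hσ₂]
    have h := ρS_gt σ₁ σ₂ ρ₁ ρ₂ hσ₁ hσ₂ hρ₁ hρ₂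
    linarith
  · rw [σS_norm σ₁ σ₂ hσ₁ hσ₂]; norm_num
  · rw [σE_norm σ₁ σ₂ hσ₁ hσ₂, ρE_norm σ₁ σ₂ ρ₁ ρ₂ hσ₁ hσ₂ hρ₁ hρ₂]; norm_num
  · rw [σE_norm σ₁ σ₂ hσ₁ hσ₂]; norm_num
end
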